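/- Let P(t) be a differentiable family of projections with derivative P'(t), let F(t) = [P'(t), P(t)], and let U(t) be the solution of dU/dt = F(t)U with U(0) = 1. Then P(t)U(t) = U(t)P(0) for all t; consequently P(t) = U(t)P(0)U(t)⁻¹. -/

import Mathlib

/-- Kato's intertwining construction: if `P` is a differentiable family of
projections with derivative `P'`, `F t = [P' t, P t]`, and `U` solves
`U' = F U` with `U 0 = 1` and each `U t` invertible, then
`P t * U t = U t * P 0`, hence `P t = U t * P 0 * (U t)⁻¹`. -/
theorem kato_intertwining
    {H : Type*} [NormedAddCommGroup H] [InnerProductSpace ℂ H] [CompleteSpace H]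
    (P P' U : ℝ → (H →L[ℂ] H))
    (hproj : ∀ t, P t * P t = P t)
    (hsa : ∀ t, IsSelfAdjoint (P t))
    (hP : ∀ t, HasDerivAt P (P' t) t)
    (hPcont : Continuous P')
    (hU : ∀ t, HasDerivAt U ((P' t * P t - P t * P' t) * U t) t)
    (hU0 : U 0 = 1)
    (hUunit : ∀ t, IsUnit (U t)) :
    ∀ t, P t * U t = U t * P 0 ∧ P t = U t * P 0 * Ring.inverse (U t) := by
  set F : ℝ → (H →L[ℂ] H) := fun t => P' t * P t - P t * P' t with hF
  -- Leibniz rule on P² = P gives P' = P'P + PP'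
  have hleib : ∀ t, P' t * P t + P t * P' t = P' t := by
    intro t
    have h1 : HasDerivAt (fun s => P s * P s) (P' t * P t + P t * P' t) t :=
      (hP t).mul (hP t)
    have h2 : HasDerivAt (fun s => P s * P s) (P' t) t := by
      have : (fun s => P s * P s) = P := funext hproj
      rw [this]; exact hP t
    exact h1.unique h2
  -- PP'P = 0
  have hmid : ∀ t, P t * P' t * P t = 0 := by
    intro t
    have h1 : P t * P' t = P' t - P' t * P t := by
      have := hleib t; linear_combination (norm := noncomm_ring) this
    calc P t * P' t * P t = (P' t - P' t * P t) * P t := by rw [h1]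
      _ = P' t * P t - P' t * (P t * P t) := by noncomm_ring
      _ = P' t * P t - P' t * P t := by rw [hproj t]
      _ = 0 := by noncomm_ring
  -- key algebraic identity : F P = P F + P', i.e. P' + P F = F P
  have hkey : ∀ t, P' t + P t * F t = F t * P t := by
    intro t
    have e3 : P' t * P t = P' t - P t * P' t := eq_sub_of_add_eq (hleib t)
    have lhs : P' t + P t * F t = P' t * P t := by
      calc P' t + P t * F t
          = P' t + (P t * (P' t * P t) - P t * P t * P' t) := by
            simp only [hF]; noncomm_ring
        _ = P' t + (P t * (P' t * P t) - P t * P' t) := by rw [hproj t]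
        _ = P' t + (P t * P' t * P t - P t * P' t) := by rw [← mul_assoc]
        _ = P' t + (0 - P t * P' t) := by rw [hmid t]
        _ = P' t - P t * P' t := by noncomm_ring
        _ = P' t * P t := e3.symm
    have rhs : F t * P t = P' t * P t := by
      calc F t * P t
          = P' t * (P t * P t) - P t * P' t * P t := by simp only [hF]; noncomm_ring
        _ = P' t * P t - 0 := by rw [hproj t, hmid t]
        _ = P' t * P t := by noncomm_ring
    rw [lhs, rhs]
  -- continuity of F
  have hPc : Continuous P := by
    rw [continuous_iff_continuousAt]; exact fun t => (hP t).continuousAt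
  have hFc : Continuous F := by
    exact ((hPcont.mul hPc).sub (hPc.mul hPcont))
  -- main intertwining, via ODE uniqueness
  have main : ∀ t, P t * U t = U t * P 0 := by
    intro t
    set a : ℝ := min t 0 - 1 with ha
    set b : ℝ := max t 0 + 1 with hb
    have hab : (0 : ℝ) ∈ Set.Ioo a b := by
      constructor
      · have : min t 0 ≤ 0 := min_le_right _ _; linarith
      · have : 0 ≤ max t 0 := le_max_right _ _; linarith
    have htab : t ∈ Set.Icc a b := by
      constructor
      · have : min t 0 ≤ t := min_le_left _ _; linarith
      · have : t ≤ max t 0 := le_max_left _ _; linarith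
    -- clamp function
    set c : ℝ → ℝ := fun s => max a (min s b) with hc
    have hcmem : ∀ s, c s ∈ Set.Icc a b := by
      intro s
      exact ⟨le_max_left _ _, max_le (le_of_lt (lt_trans hab.1 hab.2)) (min_le_right _ _)⟩
    have hceq : ∀ s ∈ Set.Icc a b, c s = s := by
      intro s hs
      simp only [hc]
      rw [min_eq_left hs.2, max_eq_right hs.1]
    -- bound on F over Icc a b
    obtain ⟨C, hC⟩ := (isCompact_Icc (a := a) (b := b)).exists_bound_of_continuousOn
      hFc.continuousOn
    have hC0 : (0 : ℝ) ≤ C := le_trans (norm_nonneg _) (hC 0 (Set.mem_Icc.mpr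
      ⟨le_of_lt hab.1, le_of_lt hab.2⟩))
    set K : NNReal := Real.toNNReal C with hK
    set v : ℝ → (H →L[ℂ] H) → (H →L[ℂ] H) := fun s X => F (c s) * X with hv
    have hlip : ∀ s, LipschitzOnWith K (v s) Set.univ := by
      intro s
      apply LipschitzOnWith.of_dist_le_mul
      intro x _ y _
      simp only [hv, dist_eq_norm]
      calc ‖F (c s) * x - F (c s) * y‖ = ‖F (c s) * (x - y)‖ := by rw [mul_sub]
        _ ≤ ‖F (c s)‖ * ‖x - y‖ := norm_mul_le _ _
        _ ≤ C * ‖x - y‖ := by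
            apply mul_le_mul_of_nonneg_right (hC _ (hcmem s)) (norm_nonneg _)
        _ = (K : ℝ) * ‖x - y‖ := by rw [hK, Real.coe_toNNReal C hC0]
    set f : ℝ → (H →L[ℂ] H) := fun s => P s * U s with hf
    set g : ℝ → (H →L[ℂ] H) := fun s => U s * P 0 with hg
    have hfd : ∀ s ∈ Set.Ioo a b, HasDerivAt f (v s (f s)) s := by
      intro s hs
      have h1 : HasDerivAt f (P' s * U s + P s * (F s * U s)) s := (hP s).mul (hU s)
      have : v s (f s) = P' s * U s + P s * (F s * U s) := by
        simp only [hv, hf, hceq s (Set.Ioo_subset_Icc_self hs)]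
        calc F s * (P s * U s) = (F s * P s) * U s := by noncomm_ring
          _ = (P' s + P s * F s) * U s := by rw [hkey s]
          _ = P' s * U s + P s * (F s * U s) := by noncomm_ring
      rw [this]; exact h1
    have hgd : ∀ s ∈ Set.Ioo a b, HasDerivAt g (v s (g s)) s := by
      intro s hs
      have h1 : HasDerivAt g (F s * U s * P 0 + U s * 0) s := (hU s).mul (hasDerivAt_const s (P 0))
      have : v s (g s) = F s * U s * P 0 + U s * 0 := by
        simp only [hv, hg, hceq s (Set.Ioo_subset_Icc_self hs)]
        noncomm_ring
      rw [this]; exact h1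
    have heq0 : f 0 = g 0 := by simp [hf, hg, hU0]
    have hUc : Continuous U := by
      rw [continuous_iff_continuousAt]; exact fun s => (hU s).continuousAt
    have := ODE_solution_unique_of_mem_Icc (s := fun _ => Set.univ) (fun s _ => hlip s) hab
      (hPc.mul hUc).continuousOn hfd (fun _ _ => Set.mem_univ _)
      (hUc.mul continuous_const).continuousOn hgd (fun _ _ => Set.mem_univ _) heq0
    have := this htab
    simpa [hf, hg] using this
  intro t
  refine ⟨main t, ?_⟩
  have h := congrArg (fun A => A * Ring.inverse (U t)) (main t)
  rw [mul_assoc, Ring.mul_inverse_cancel _ (hUunit t), mul_one] at h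
  rw [← h]
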